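/- For every τ > 0 and x ∈ ℝ, v is differentiable in x at (τ,x) and ∂_x v(τ,x) = e^x · N(x/√τ + √τ/2) (the Black–Scholes delta in reduced variables). -/

import Mathlib

open MeasureTheory

/-- Standard normal cumulative distribution function. -/
noncomputable def stdN (y : ℝ) : ℝ :=
  ∫ u in Set.Iio y, Real.exp (-u ^ 2 / 2) / Real.sqrt (2 * Real.pi)

/-- Standard normal density. -/
noncomputable def stdn (y : ℝ) : ℝ :=
  Real.exp (-y ^ 2 / 2) / Real.sqrt (2 * Real.pi)

/-- Unit-volatility Black–Scholes price in reduced variables. -/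
noncomputable def bsv (τ x : ℝ) : ℝ :=
  Real.exp x * stdN (x / Real.sqrt τ + Real.sqrt τ / 2) -
    stdN (x / Real.sqrt τ - Real.sqrt τ / 2)

lemma stdn_continuous : Continuous stdn := by
  unfold stdn
  fun_prop

lemma stdn_integrable : Integrable stdn := by
  have h : Integrable fun u : ℝ => Real.exp (-(1/2 : ℝ) * u ^ 2) :=
    integrable_exp_neg_mul_sq (by norm_num)
  have : Integrable fun u : ℝ => Real.exp (-(1/2 : ℝ) * u ^ 2) / Real.sqrt (2 * Real.pi) :=
    h.div_const _
  refine this.congr (Filter.Eventually.of_forall fun u => ?_)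
  unfold stdn
  ring_nf

lemma stdN_eq_Iic (y : ℝ) : stdN y = ∫ u in Set.Iic y, stdn u := by
  unfold stdN stdn
  exact (integral_Iic_eq_integral_Iio' (measure_singleton y)).symm

lemma stdN_hasDerivAt (y : ℝ) : HasDerivAt stdN (stdn y) y := by
  have h0 : ∀ z : ℝ, stdN z = stdN 0 + ∫ t in (0:ℝ)..z, stdn t := by
    intro z
    rw [stdN_eq_Iic, stdN_eq_Iic]
    have h := intervalIntegral.integral_Iic_sub_Iic (f := stdn) (a := (0:ℝ)) (b := z)
      stdn_integrable.integrableOn stdn_integrable.integrableOn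
    linarith
  have hd : HasDerivAt (fun z => stdN 0 + ∫ t in (0:ℝ)..z, stdn t) (stdn y) y := by
    refine HasDerivAt.const_add _ ?_
    exact intervalIntegral.integral_hasDerivAt_right
      stdn_integrable.intervalIntegrable
      stdn_continuous.aestronglyMeasurable.stronglyMeasurableAtFilter
      stdn_continuous.continuousAt
  exact hd.congr_of_eventuallyEq (Filter.Eventually.of_forall h0)

/-- Black–Scholes delta in reduced variables: `∂_x v(τ,x) = e^x N(x/√τ + √τ/2)`. -/
theorem bsv_hasDerivAt_x (τ x : ℝ) (hτ : 0 < τ) :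
    HasDerivAt (fun y => bsv τ y)
      (Real.exp x * stdN (x / Real.sqrt τ + Real.sqrt τ / 2)) x := by
  set s := Real.sqrt τ with hs
  have hspos : 0 < s := Real.sqrt_pos.mpr hτ
  have hsne : s ≠ 0 := ne_of_gt hspos
  set dp := x / s + s / 2 with hdp
  set dm := x / s - s / 2 with hdm
  -- derivative of the affine inner functions
  have hip : HasDerivAt (fun y : ℝ => y / s + s / 2) (1 / s) x := by
    simpa using ((hasDerivAt_id x).div_const s).add_const (s / 2)
  have him : HasDerivAt (fun y : ℝ => y / s - s / 2) (1 / s) x := by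
    simpa using ((hasDerivAt_id x).div_const s).sub_const (s / 2)
  have hNp : HasDerivAt (fun y : ℝ => stdN (y / s + s / 2)) (stdn dp * (1 / s)) x :=
    by have := (stdN_hasDerivAt dp).comp x hip; exact this
  have hNm : HasDerivAt (fun y : ℝ => stdN (y / s - s / 2)) (stdn dm * (1 / s)) x :=
    by have := (stdN_hasDerivAt dm).comp x him; exact this
  have hexp : HasDerivAt Real.exp (Real.exp x) x := Real.hasDerivAt_exp x
  have hmul : HasDerivAt (fun y : ℝ => Real.exp y * stdN (y / s + s / 2))
      (Real.exp x * stdN dp + Real.exp x * (stdn dp * (1 / s))) x := by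
    have := hexp.mul hNp; exact this
  have htot : HasDerivAt (fun y => bsv τ y)
      (Real.exp x * stdN dp + Real.exp x * (stdn dp * (1 / s)) - stdn dm * (1 / s)) x := by
    unfold bsv
    exact hmul.sub hNm
  have hkey : Real.exp x * stdn dp = stdn dm := by
    unfold stdn
    rw [mul_div_assoc', ← Real.exp_add]
    have hx : dp * s = x + s ^ 2 / 2 := by
      rw [hdp]; field_simp
    have hdm' : dm = dp - s := by rw [hdp, hdm]; ring
    have harg : x + -dp ^ 2 / 2 = -dm ^ 2 / 2 := by rw [hdm']; nlinarith [hx]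
    rw [harg]
  have : Real.exp x * stdN dp + Real.exp x * (stdn dp * (1 / s)) - stdn dm * (1 / s)
      = Real.exp x * stdN dp := by
    rw [← mul_assoc, hkey]; ring
  rw [this] at htot
  exact htot
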